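/- There exists an absolute constant C such that for all a, b ∈ S² with a ≠ b and every ε ∈ (0,1), the spherical surface measure of the set S_{a,b} := { c ∈ S² : |(a − c) × b| ≤ ε } satisfies σ(S_{a,b}) ≤ C ε^{3/2}. -/

import Mathlib

open MeasureTheory Real Set
open scoped RealInnerProductSpace ENNReal NNReal

noncomputable section

/-- `ℝ³` with the Euclidean norm. -/
abbrev E3 : Type := EuclideanSpace ℝ (Fin 3)

/-- Build a vector of `ℝ³` from coordinates. -/
def mk3 (a b c : ℝ) : E3 := (EuclideanSpace.equiv (Fin 3) ℝ).symm ![a, b, c]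

/-- The cross product on `ℝ³`. -/
def cross3 (a b : E3) : E3 :=
  mk3 (a 1 * b 2 - a 2 * b 1) (a 2 * b 0 - a 0 * b 2) (a 0 * b 1 - a 1 * b 0)

abbrev E2 : Type := EuclideanSpace ℝ (Fin 2)

lemma e2_dist (x y : E2) : dist x y = Real.sqrt (dist (x 0) (y 0) ^ 2 + dist (x 1) (y 1) ^ 2) := by
  rw [EuclideanSpace.dist_eq, Fin.sum_univ_two]

lemma lip2 : LipschitzWith 2 ((EuclideanSpace.equiv (Fin 2) ℝ).symm : (Fin 2 → ℝ) → E2) := by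
  apply LipschitzWith.of_dist_le_mul
  intro x y
  have h0 : dist (x 0) (y 0) ≤ dist x y := dist_le_pi_dist x y 0
  have h1 : dist (x 1) (y 1) ≤ dist x y := dist_le_pi_dist x y 1
  have hd : (0:ℝ) ≤ dist x y := dist_nonneg
  have hEq : dist ((EuclideanSpace.equiv (Fin 2) ℝ).symm x) ((EuclideanSpace.equiv (Fin 2) ℝ).symm y)
      = Real.sqrt (dist (x 0) (y 0) ^ 2 + dist (x 1) (y 1) ^ 2) := e2_dist _ _
  rw [hEq]
  calc Real.sqrt (dist (x 0) (y 0) ^ 2 + dist (x 1) (y 1) ^ 2)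
      ≤ Real.sqrt ((2 * dist x y)^2) := by
        apply Real.sqrt_le_sqrt
        nlinarith [@dist_nonneg _ _ (x 0) (y 0), @dist_nonneg _ _ (x 1) (y 1)]
    _ = 2 * dist x y := by
        rw [Real.sqrt_sq (by positivity)]

lemma hm_pi2 : (μH[2] : Measure (Fin 2 → ℝ)) = volume := by
  have := MeasureTheory.hausdorffMeasure_pi_real (ι := Fin 2)
  simpa using this

lemma plane_ball_bound (z : E2) (r : ℝ) (hr : 0 ≤ r) :
    μH[2] (Metric.closedBall z r) ≤ ENNReal.ofReal (16 * r ^ 2) := by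
  set e := EuclideanSpace.equiv (Fin 2) ℝ with he
  have himg : Metric.closedBall z r = e.symm '' (e '' Metric.closedBall z r) := by
    rw [Set.image_image]; simp
  have h1 : μH[2] (Metric.closedBall z r) ≤ ((2:ℝ≥0):ℝ≥0∞) ^ (2:ℝ) * μH[2] (e '' Metric.closedBall z r) := by
    calc μH[2] (Metric.closedBall z r) = μH[2] (e.symm '' (e '' Metric.closedBall z r)) := by rw [← himg]
      _ ≤ ((2:ℝ≥0):ℝ≥0∞) ^ (2:ℝ) * μH[2] (e '' Metric.closedBall z r) :=
        lip2.hausdorffMeasure_image_le (by norm_num) _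
  have h2 : (μH[2] (e '' Metric.closedBall z r) : ℝ≥0∞) ≤ ENNReal.ofReal (2*r) * ENNReal.ofReal (2*r) := by
    rw [hm_pi2]
    have hsub : (e '' Metric.closedBall z r) ⊆ Set.pi Set.univ (fun i => Set.Icc (z i - r) (z i + r)) := by
      rintro y ⟨x, hx, rfl⟩
      intro i _
      have hcoord : dist (x i) (z i) ≤ dist x z := by
        have h2' : dist (x i) (z i) ^ 2 ≤ ∑ j, dist (x j) (z j) ^ 2 :=
          Finset.single_le_sum (f := fun j => dist (x j) (z j) ^ 2) (fun j _ => sq_nonneg _) (Finset.mem_univ i)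
        rw [EuclideanSpace.dist_eq x z]
        calc dist (x i) (z i) = Real.sqrt (dist (x i) (z i) ^ 2) := (Real.sqrt_sq dist_nonneg).symm
          _ ≤ _ := Real.sqrt_le_sqrt h2'
      have hle : dist (x i) (z i) ≤ r := hcoord.trans (Metric.mem_closedBall.1 hx)
      rw [Real.dist_eq] at hle
      have hxi : e x i = x i := rfl
      rw [hxi]
      constructor <;> [linarith [abs_le.1 hle |>.1]; linarith [abs_le.1 hle |>.2]]
    calc volume (e '' Metric.closedBall z r) ≤ volume (Set.pi Set.univ (fun i : Fin 2 => Set.Icc (z i - r) (z i + r))) := measure_mono hsub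
      _ = ∏ i : Fin 2, volume (Set.Icc (z i - r) (z i + r)) := volume_pi_pi _
      _ = ∏ _i : Fin 2, ENNReal.ofReal (2*r) := by
          apply Finset.prod_congr rfl; intro i _; rw [Real.volume_Icc]; ring_nf
      _ = ENNReal.ofReal (2*r) * ENNReal.ofReal (2*r) := by rw [Fin.prod_univ_two]
  have hpow : ((2:ℝ≥0):ℝ≥0∞) ^ (2:ℝ) = ENNReal.ofReal 4 := by
    rw [show (2:ℝ) = ((2:ℕ):ℝ) by norm_num, ENNReal.rpow_natCast]
    rw [show ENNReal.ofReal 4 = (4:ℝ≥0∞) by norm_num [ENNReal.ofReal]]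
    norm_num
  calc μH[2] (Metric.closedBall z r) ≤ ((2:ℝ≥0):ℝ≥0∞) ^ (2:ℝ) * μH[2] (e '' Metric.closedBall z r) := h1
    _ ≤ ((2:ℝ≥0):ℝ≥0∞) ^ (2:ℝ) * (ENNReal.ofReal (2*r) * ENNReal.ofReal (2*r)) := mul_le_mul_right h2 _
    _ = ENNReal.ofReal (16 * r ^ 2) := by
        rw [hpow, ← ENNReal.ofReal_mul (by positivity), ← ENNReal.ofReal_mul (by norm_num)]
        congr 1
        ring


lemma exists_onb (c₀ : E3) (hc₀ : ‖c₀‖ = 1) :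
    ∃ B : OrthonormalBasis (Fin 3) ℝ E3, B 0 = c₀ := by
  have horth : Orthonormal ℝ (Set.restrict ({0} : Set (Fin 3)) (fun _ => c₀)) := by
    rw [orthonormal_iff_ite]
    rintro ⟨i, hi⟩ ⟨j, hj⟩
    simp only [Set.mem_singleton_iff] at hi hj
    subst hi; subst hj
    have : ⟪c₀, c₀⟫ = 1 := by rw [real_inner_self_eq_norm_sq, hc₀]; norm_num
    rw [if_pos rfl]; exact this
  have hcard : Module.finrank ℝ E3 = Fintype.card (Fin 3) := by
    simp [finrank_euclideanSpace_fin]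
  obtain ⟨B, hB⟩ := horth.exists_orthonormalBasis_extension_of_card_eq hcard
  exact ⟨B, hB 0 rfl⟩

def h3 : E3 → EuclideanSpace ℝ (Fin 2) :=
  fun x => (EuclideanSpace.equiv (Fin 2) ℝ).symm ![x 1, x 2]

lemma dist3 (x y : E3) :
    dist x y ^ 2 = dist (x 0) (y 0) ^ 2 + dist (h3 x) (h3 y) ^ 2 := by
  have h1 : dist (h3 x) (h3 y) ^ 2 = dist (x 1) (y 1) ^ 2 + dist (x 2) (y 2) ^ 2 := by
    rw [EuclideanSpace.dist_eq, Real.sq_sqrt (by positivity), Fin.sum_univ_two]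
    rfl
  rw [h1, EuclideanSpace.dist_eq, Real.sq_sqrt (by positivity), Fin.sum_univ_three]; ring


lemma pow22 : ((2:ℝ≥0):ℝ≥0∞) ^ (2:ℝ) = ENNReal.ofReal 4 := by
  rw [show (2:ℝ) = ((2:ℕ):ℝ) by norm_num, ENNReal.rpow_natCast]
  rw [show ENNReal.ofReal 4 = (4:ℝ≥0∞) by norm_num [ENNReal.ofReal]]
  norm_num

lemma cap_bound (s : Set E3) (c₀ : E3) (ρ : ℝ) (hρ0 : 0 ≤ ρ) (hρ : ρ ≤ 1/2)
    (hc₀ : ‖c₀‖ = 1) (hs : ∀ c ∈ s, ‖c‖ = 1) (hdist : ∀ c ∈ s, ‖c - c₀‖ ≤ ρ) :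
    μH[2] s ≤ ENNReal.ofReal (64 * ρ ^ 2) := by
  obtain ⟨B, hB0⟩ := exists_onb c₀ hc₀
  set R := B.repr with hR
  -- inner product estimate
  have key : ∀ c ∈ s, ∀ c' ∈ s, |⟪c₀, c⟫ - ⟪c₀, c'⟫| ≤ ρ * ‖c - c'‖ := by
    intro c hc c' hc'
    have e1 : ⟪c₀, c⟫ = 1 - ‖c - c₀‖ ^ 2 / 2 := by
      have := norm_sub_sq_real c c₀
      rw [hs c hc, hc₀, real_inner_comm] at this
      nlinarith [this]
    have e2 : ⟪c₀, c'⟫ = 1 - ‖c' - c₀‖ ^ 2 / 2 := by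
      have := norm_sub_sq_real c' c₀
      rw [hs c' hc', hc₀, real_inner_comm] at this
      nlinarith [this]
    have e3 : |‖c' - c₀‖ - ‖c - c₀‖| ≤ ‖c - c'‖ := by
      have := abs_norm_sub_norm_le (c' - c₀) (c - c₀)
      have h4 : ‖c' - c₀ - (c - c₀)‖ = ‖c - c'‖ := by rw [show c' - c₀ - (c - c₀) = -(c - c') by abel, norm_neg]
      rwa [h4] at this
    rw [e1, e2]
    have h5 : ‖c - c₀‖ ≤ ρ := hdist c hc
    have h6 : ‖c' - c₀‖ ≤ ρ := hdist c' hc'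
    have h7 : (0:ℝ) ≤ ‖c - c₀‖ := norm_nonneg _
    have h8 : (0:ℝ) ≤ ‖c' - c₀‖ := norm_nonneg _
    rw [abs_le] at e3 ⊢
    constructor <;> nlinarith [e3.1, e3.2]
  set s' := R '' s with hs'
  have hiso : μH[(2:ℝ)] s' = μH[(2:ℝ)] s :=
    R.isometry.hausdorffMeasure_image (Or.inl (by norm_num)) s
  have hcoord : ∀ c : E3, (R c) 0 = ⟪c₀, c⟫ := by
    intro c
    rw [hR, B.repr_apply_apply, hB0]
  -- antilipschitz of h3 on s'
  have hanti : ∀ x ∈ s', ∀ y ∈ s', dist x y ≤ 2 * dist (h3 x) (h3 y) := by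
    rintro x ⟨c, hc, rfl⟩ y ⟨c', hc', rfl⟩
    have hd : dist (R c) (R c') = ‖c - c'‖ := by rw [R.dist_map, dist_eq_norm]
    have h0 : |(R c) 0 - (R c') 0| ≤ ρ * ‖c - c'‖ := by
      rw [hcoord, hcoord]; exact key c hc c' hc'
    have hident := dist3 (R c) (R c')
    rw [hd] at hident
    have hdist0 : dist ((R c) 0) ((R c') 0) = |(R c) 0 - (R c') 0| := Real.dist_eq _ _
    rw [hdist0] at hident
    have hnn : (0:ℝ) ≤ ‖c - c'‖ := norm_nonneg _
    have hnn2 : (0:ℝ) ≤ dist (h3 (R c)) (h3 (R c')) := dist_nonneg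
    rw [hd]
    have hA2 : |R c 0 - R c' 0| ^ 2 ≤ (ρ * ‖c - c'‖) ^ 2 :=
      pow_le_pow_left₀ (abs_nonneg _) h0 2
    have hρ2 : ρ ^ 2 ≤ 1/4 := by nlinarith
    nlinarith [hident, hA2, mul_le_mul_of_nonneg_right hρ2 (sq_nonneg ‖c - c'‖),
      sq_nonneg (‖c - c'‖ - 2 * dist (h3 (R c)) (h3 (R c'))),
      sq_nonneg (‖c - c'‖ + 2 * dist (h3 (R c)) (h3 (R c')))]
  have hinj : Set.InjOn h3 s' := by
    intro x hx y hy hxy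
    have h := hanti x hx y hy
    rw [hxy, dist_self, mul_zero] at h
    exact dist_le_zero.1 h
  have hginv : ∀ x ∈ s', Function.invFunOn h3 s' (h3 x) = x := by
    intro x hx
    have hmem : ∃ a ∈ s', h3 a = h3 x := ⟨x, hx, rfl⟩
    exact hinj (Function.invFunOn_mem hmem) hx (Function.invFunOn_eq hmem)
  set g := Function.invFunOn h3 s' with hg
  have hglip : LipschitzOnWith 2 g (h3 '' s') := by
    rw [lipschitzOnWith_iff_dist_le_mul]
    rintro y₁ ⟨x₁, hx₁, rfl⟩ y₂ ⟨x₂, hx₂, rfl⟩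
    rw [hginv x₁ hx₁, hginv x₂ hx₂]
    have := hanti x₁ hx₁ x₂ hx₂
    calc dist x₁ x₂ ≤ 2 * dist (h3 x₁) (h3 x₂) := this
      _ = ((2:ℝ≥0):ℝ) * dist (h3 x₁) (h3 x₂) := by norm_num
  have himg : g '' (h3 '' s') = s' := by
    rw [Set.image_image]
    calc (fun x => g (h3 x)) '' s' = (fun x => x) '' s' := Set.image_congr hginv
      _ = s' := Set.image_id s'
  have hlip3 : ∀ x y : E3, dist (h3 x) (h3 y) ≤ dist x y := by
    intro x y
    nlinarith [dist3 x y, @dist_nonneg _ _ (h3 x) (h3 y), @dist_nonneg _ _ x y,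
      sq_nonneg (dist (x 0) (y 0))]
  have hball : h3 '' s' ⊆ Metric.closedBall (h3 (R c₀)) ρ := by
    rintro y ⟨x, ⟨c, hc, rfl⟩, rfl⟩
    have : dist (h3 (R c)) (h3 (R c₀)) ≤ dist (R c) (R c₀) := hlip3 _ _
    have hd2 : dist (R c) (R c₀) = ‖c - c₀‖ := by rw [R.dist_map, dist_eq_norm]
    rw [Metric.mem_closedBall]
    calc dist (h3 (R c)) (h3 (R c₀)) ≤ dist (R c) (R c₀) := this
      _ = ‖c - c₀‖ := hd2
      _ ≤ ρ := hdist c hc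
  calc μH[(2:ℝ)] s = μH[(2:ℝ)] s' := hiso.symm
    _ = μH[(2:ℝ)] (g '' (h3 '' s')) := by rw [himg]
    _ ≤ ((2:ℝ≥0):ℝ≥0∞) ^ (2:ℝ) * μH[(2:ℝ)] (h3 '' s') :=
        hglip.hausdorffMeasure_image_le (by norm_num)
    _ ≤ ((2:ℝ≥0):ℝ≥0∞) ^ (2:ℝ) * μH[(2:ℝ)] (Metric.closedBall (h3 (R c₀)) ρ) :=
        mul_le_mul_right (measure_mono hball) _
    _ ≤ ((2:ℝ≥0):ℝ≥0∞) ^ (2:ℝ) * ENNReal.ofReal (16 * ρ ^ 2) :=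
        mul_le_mul_right (plane_ball_bound _ ρ hρ0) _
    _ = ENNReal.ofReal (64 * ρ ^ 2) := by
        rw [pow22, ← ENNReal.ofReal_mul (by norm_num)]
        congr 1
        ring


lemma norm3 (x : E3) : ‖x‖ ^ 2 = x 0 ^ 2 + x 1 ^ 2 + x 2 ^ 2 := by
  rw [EuclideanSpace.norm_eq, Real.sq_sqrt (by positivity), Fin.sum_univ_three]
  simp [sq_abs]

lemma inner3 (x y : E3) : ⟪x, y⟫ = x 0 * y 0 + x 1 * y 1 + x 2 * y 2 := by
  rw [PiLp.inner_apply, Fin.sum_univ_three]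
  simp [RCLike.inner_apply, conj_trivial]
  ring

lemma sub3 (x y : E3) (i : Fin 3) : (x - y) i = x i - y i := rfl
lemma smul3 (t : ℝ) (x : E3) (i : Fin 3) : (t • x) i = t * x i := rfl

lemma cross_eq (v b : E3) (hb : ‖b‖ = 1) : ‖cross3 v b‖ = ‖v - ⟪b, v⟫ • b‖ := by
  have hb2 : b 0 ^ 2 + b 1 ^ 2 + b 2 ^ 2 = 1 := by
    have := norm3 b; rw [hb] at this; linarith
  have hsq : ‖cross3 v b‖ ^ 2 = ‖v - ⟪b, v⟫ • b‖ ^ 2 := by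
    rw [norm3, norm3, inner3]
    simp only [sub3, smul3]
    show (v 1 * b 2 - v 2 * b 1)^2 + (v 2 * b 0 - v 0 * b 2)^2 + (v 0 * b 1 - v 1 * b 0)^2 = _
    linear_combination ((v 0 ^ 2 + v 1 ^ 2 + v 2 ^ 2) - (b 0 * v 0 + b 1 * v 1 + b 2 * v 2) ^ 2) * hb2
  calc ‖cross3 v b‖ = Real.sqrt (‖cross3 v b‖ ^ 2) := (Real.sqrt_sq (norm_nonneg _)).symm
    _ = Real.sqrt (‖v - ⟪b, v⟫ • b‖ ^ 2) := by rw [hsq]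
    _ = ‖v - ⟪b, v⟫ • b‖ := Real.sqrt_sq (norm_nonneg _)

lemma sphere_bound : ∃ A : ℝ, 0 ≤ A ∧ μH[(2:ℝ)] (Metric.sphere (0:E3) 1) ≤ ENNReal.ofReal A := by
  have hcomp : IsCompact (Metric.sphere (0:E3) 1) := isCompact_sphere _ _
  have hcover : Metric.sphere (0:E3) 1 ⊆
      ⋃ x : Metric.sphere (0:E3) 1, Metric.ball (x:E3) (1/4) := by
    intro c hc
    exact Set.mem_iUnion.2 ⟨⟨c, hc⟩, by simp [Metric.mem_ball]⟩
  obtain ⟨t, ht⟩ := hcomp.elim_finite_subcover _ (fun x => Metric.isOpen_ball) hcover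
  refine ⟨16 * t.card, by positivity, ?_⟩
  have hsub : Metric.sphere (0:E3) 1 ⊆
      ⋃ x ∈ t, (Metric.sphere (0:E3) 1 ∩ Metric.ball (x:E3) (1/4)) := by
    intro c hc
    obtain ⟨x, hx, hcx⟩ := Set.mem_iUnion₂.1 (ht hc)
    exact Set.mem_iUnion₂.2 ⟨x, hx, hc, hcx⟩
  have hpiece : ∀ x : Metric.sphere (0:E3) 1,
      μH[(2:ℝ)] (Metric.sphere (0:E3) 1 ∩ Metric.ball (x:E3) (1/4)) ≤ ENNReal.ofReal 16 := by
    intro x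
    have hx1 : ‖(x:E3)‖ = 1 := by
      have := x.2; rwa [mem_sphere_iff_norm, sub_zero] at this
    have := cap_bound (Metric.sphere (0:E3) 1 ∩ Metric.ball (x:E3) (1/4)) (x:E3) (1/2)
      (by norm_num) (le_refl _) hx1
      (fun c hc => by have := hc.1; rwa [mem_sphere_iff_norm, sub_zero] at this)
      (fun c hc => by
        have := hc.2
        rw [Metric.mem_ball, dist_eq_norm] at this
        linarith)
    calc μH[(2:ℝ)] (Metric.sphere (0:E3) 1 ∩ Metric.ball (x:E3) (1/4))
        ≤ ENNReal.ofReal (64 * (1/2)^2) := this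
      _ = ENNReal.ofReal 16 := by norm_num
  calc μH[(2:ℝ)] (Metric.sphere (0:E3) 1)
      ≤ μH[(2:ℝ)] (⋃ x ∈ t, (Metric.sphere (0:E3) 1 ∩ Metric.ball (x:E3) (1/4))) :=
        measure_mono hsub
    _ ≤ ∑ x ∈ t, μH[(2:ℝ)] (Metric.sphere (0:E3) 1 ∩ Metric.ball (x:E3) (1/4)) :=
        measure_biUnion_finset_le t _
    _ ≤ ∑ _x ∈ t, ENNReal.ofReal 16 := Finset.sum_le_sum (fun x _ => hpiece x)
    _ = t.card • ENNReal.ofReal 16 := by rw [Finset.sum_const]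
    _ = ENNReal.ofReal (16 * t.card) := by
        rw [nsmul_eq_mul, ← ENNReal.ofReal_natCast, ← ENNReal.ofReal_mul (by positivity)]
        rw [mul_comm]


def wb (b x : E3) : E3 := x - ⟪b, x⟫ • b

lemma wb_sub (b x y : E3) : wb b x - wb b y = wb b (x - y) := by
  simp only [wb, inner_sub_right, sub_smul]
  abel

lemma wb_inner (b : E3) (hb : ‖b‖ = 1) (x : E3) : ⟪b, wb b x⟫ = 0 := by
  simp only [wb, inner_sub_right, real_inner_smul_right]
  rw [real_inner_self_eq_norm_sq, hb]
  ring

lemma wb_pyth (b : E3) (hb : ‖b‖ = 1) (x : E3) : ‖x‖^2 = ⟪b,x⟫^2 + ‖wb b x‖^2 := by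
  have hx : x = ⟪b,x⟫ • b + wb b x := by simp [wb]
  have ho : ⟪(⟪b,x⟫ • b), wb b x⟫ = 0 := by
    rw [real_inner_smul_left, wb_inner b hb]; ring
  calc ‖x‖^2 = ‖⟪b,x⟫ • b + wb b x‖^2 := by rw [← hx]
    _ = ‖⟪b,x⟫ • b‖^2 + 2*⟪(⟪b,x⟫ • b), wb b x⟫ + ‖wb b x‖^2 := norm_add_sq_real _ _
    _ = ⟪b,x⟫^2 + ‖wb b x‖^2 := by
        rw [ho, norm_smul, hb, Real.norm_eq_abs]
        rw [mul_one, sq_abs]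
        ring

lemma wb_pyth_sub (b : E3) (hb : ‖b‖ = 1) (x y : E3) :
    ‖x - y‖^2 = (⟪b,x⟫ - ⟪b,y⟫)^2 + ‖wb b x - wb b y‖^2 := by
  rw [wb_sub]
  have := wb_pyth b hb (x - y)
  rwa [inner_sub_right] at this

set_option maxHeartbeats 1000000 in
/-- The surface measure (`2`-dimensional Hausdorff measure) of
`S_{a,b} = {c ∈ S² : |(a−c) × b| ≤ ε}` is at most `C ε^{3/2}`. -/
theorem stmt18 :
    ∃ C : ℝ, ∀ a b : E3, a ∈ Metric.sphere (0:E3) 1 → b ∈ Metric.sphere (0:E3) 1 →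
      a ≠ b → ∀ ε : ℝ, ε ∈ Ioo (0:ℝ) 1 →
      μH[2] {c : E3 | c ∈ Metric.sphere (0:E3) 1 ∧ ‖cross3 (a - c) b‖ ≤ ε} ≤
        ENNReal.ofReal (C * ε ^ ((3:ℝ) / 2)) := by
  obtain ⟨A, hA0, hA⟩ := sphere_bound
  refine ⟨4608 + 23 * A, ?_⟩
  intro a b ha hb hab ε hε
  obtain ⟨hε0, hε1⟩ := hε
  have ha1 : ‖a‖ = 1 := by rwa [mem_sphere_iff_norm, sub_zero] at ha
  have hb1 : ‖b‖ = 1 := by rwa [mem_sphere_iff_norm, sub_zero] at hb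
  set S := {c : E3 | c ∈ Metric.sphere (0:E3) 1 ∧ ‖cross3 (a - c) b‖ ≤ ε} with hS
  have hC0 : (0:ℝ) ≤ 4608 + 23 * A := by linarith
  have hsqε : Real.sqrt ε * Real.sqrt ε = ε := Real.mul_self_sqrt hε0.le
  have hsqpos : 0 < Real.sqrt ε := Real.sqrt_pos.2 hε0
  have hsqle1 : Real.sqrt ε ≤ 1 := by
    rw [show (1:ℝ) = Real.sqrt 1 by rw [Real.sqrt_one]]
    exact Real.sqrt_le_sqrt hε1.le
  have hε32 : ε ^ ((3:ℝ)/2) = ε * Real.sqrt ε := by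
    rw [show (3:ℝ)/2 = 1 + 1/2 by norm_num, Real.rpow_add hε0, Real.rpow_one,
      ← Real.sqrt_eq_rpow]
  -- members of S
  have hmemS : ∀ c ∈ S, ‖c‖ = 1 ∧ ‖wb b a - wb b c‖ ≤ ε := by
    intro c hc
    obtain ⟨hc1, hc2⟩ := hc
    constructor
    · rwa [mem_sphere_iff_norm, sub_zero] at hc1
    · rw [cross_eq (a - c) b hb1] at hc2
      rwa [wb_sub, wb]
  rcases le_or_gt ε (1/8) with hsmall | hlarge
  · -- SMALL case
    set d := ‖wb b a‖ with hd
    have hd0 : (0:ℝ) ≤ d := norm_nonneg _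
    have hd1 : d ≤ 1 := by
      have := wb_pyth b hb1 a
      rw [ha1] at this
      nlinarith [sq_nonneg (⟪b,a⟫)]
    set m2 := max 0 (1 - (d + ε)^2) with hm2
    set m := Real.sqrt m2 with hm
    have hm0 : 0 ≤ m := Real.sqrt_nonneg _
    have hmsq : m^2 = m2 := Real.sq_sqrt (le_max_left _ _)
    have hubound : ∀ c ∈ S, m ≤ |⟪b,c⟫| ∧ |⟪b,c⟫| ≤ m + 2 * Real.sqrt ε := by
      intro c hc
      obtain ⟨hc1, hcw⟩ := hmemS c hc
      have hu2 : ⟪b,c⟫^2 = 1 - ‖wb b c‖^2 := by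
        have := wb_pyth b hb1 c
        rw [hc1] at this
        nlinarith [this]
      have hwc0 : (0:ℝ) ≤ ‖wb b c‖ := norm_nonneg _
      have hwc_ub : ‖wb b c‖ ≤ d + ε := by
        have h := norm_sub_norm_le (wb b c) (wb b a)
        rw [norm_sub_rev] at h
        linarith
      have hwc_lb : d - ε ≤ ‖wb b c‖ := by
        have h := norm_sub_norm_le (wb b a) (wb b c)
        linarith
      constructor
      · have hle : m2 ≤ ⟪b,c⟫^2 := by
          rcases le_or_gt (1 - (d+ε)^2) 0 with h | h
          · rw [hm2, max_eq_left h]; positivity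
          · rw [hm2, max_eq_right h.le]
            nlinarith [hwc_ub, hwc0]
        calc m ≤ Real.sqrt (⟪b,c⟫^2) := Real.sqrt_le_sqrt hle
          _ = |⟪b,c⟫| := Real.sqrt_sq_eq_abs _
      · have hule1 : ⟪b,c⟫^2 ≤ 1 := by nlinarith [hu2, sq_nonneg (‖wb b c‖)]
        have hkey : ⟪b,c⟫^2 - m2 ≤ 4*ε := by
          rcases le_or_gt (1 - (d+ε)^2) 0 with h | h
          · rw [hm2, max_eq_left h]
            have hge : 1 ≤ d + ε := by nlinarith [hd0, hε0.le]
            rcases le_or_gt ε d with hde | hde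
            · have hwsq : (d-ε)^2 ≤ ‖wb b c‖^2 := by
                have : (0:ℝ) ≤ d - ε := by linarith
                nlinarith [hwc_lb]
              nlinarith [hu2, hwsq, hd1, hε0.le]
            · linarith [hule1]
          · rw [hm2, max_eq_right h.le]
            rcases le_or_gt ε d with hde | hde
            · have hwsq : (d-ε)^2 ≤ ‖wb b c‖^2 := by
                have : (0:ℝ) ≤ d - ε := by linarith
                nlinarith [hwc_lb]
              nlinarith [hu2, hwsq, hd1, hε0.le]
            · nlinarith [hule1, hd0, hε1.le, hε0.le]
        have h1 : |⟪b,c⟫| ≤ Real.sqrt (m2 + 4*ε) := by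
          rw [← Real.sqrt_sq_eq_abs]
          exact Real.sqrt_le_sqrt (by linarith)
        have h2 : Real.sqrt (m2 + 4*ε) ≤ m + 2*Real.sqrt ε := by
          have hsq2 : m2 + 4*ε ≤ (m + 2*Real.sqrt ε)^2 := by
            nlinarith [hmsq, hm0, hsqε, hsqpos.le]
          calc Real.sqrt (m2 + 4*ε) ≤ Real.sqrt ((m + 2*Real.sqrt ε)^2) := Real.sqrt_le_sqrt hsq2
            _ = m + 2*Real.sqrt ε := Real.sqrt_sq (by positivity)
        linarith
    set N := ⌈(2:ℝ)/Real.sqrt ε⌉₊ with hN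
    set T : ℝ → ℕ → Set E3 :=
      fun τ i => S ∩ {c | τ * ⟪b,c⟫ ∈ Icc (m + i*ε) (m + (i+1)*ε)} with hT
    -- cover
    have hcov : S ⊆ (⋃ i ∈ Finset.range (N+1), T 1 i) ∪ (⋃ i ∈ Finset.range (N+1), T (-1) i) := by
      intro c hc
      obtain ⟨hlb, hub⟩ := hubound c hc
      have hx0 : (0:ℝ) ≤ (|⟪b,c⟫| - m)/ε := by
        apply div_nonneg (by linarith) hε0.le
      set i := ⌊(|⟪b,c⟫| - m)/ε⌋₊ with hi
      have hiN : i ∈ Finset.range (N+1) := by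
        rw [Finset.mem_range, Nat.lt_succ_iff]
        have hxle : (|⟪b,c⟫| - m)/ε ≤ 2/Real.sqrt ε := by
          rw [div_le_div_iff₀ hε0 hsqpos]
          nlinarith [hub, hsqε, hsqpos]
        have h1 : (i:ℝ) ≤ 2/Real.sqrt ε := le_trans (Nat.floor_le hx0) hxle
        have h2 : (i:ℝ) ≤ (N:ℝ) := le_trans h1 (Nat.le_ceil _)
        exact_mod_cast h2
      have hmem : |⟪b,c⟫| ∈ Icc (m + i*ε) (m + (i+1)*ε) := by
        constructor
        · have h1 : (i:ℝ) ≤ (|⟪b,c⟫| - m)/ε := Nat.floor_le hx0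
          have h2 : (i:ℝ)*ε ≤ |⟪b,c⟫| - m := by
            rw [← div_mul_cancel₀ (|⟪b,c⟫| - m) (ne_of_gt hε0)]
            exact mul_le_mul_of_nonneg_right h1 hε0.le
          linarith
        · have h1 : (|⟪b,c⟫| - m)/ε < (i:ℝ) + 1 := Nat.lt_floor_add_one _
          have h2 : |⟪b,c⟫| - m < ((i:ℝ)+1)*ε := by
            rw [← div_mul_cancel₀ (|⟪b,c⟫| - m) (ne_of_gt hε0)]
            exact mul_lt_mul_of_pos_right h1 hε0
          push_cast
          linarith
      rcases le_or_gt 0 (⟪b,c⟫) with hu | hu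
      · left
        refine Set.mem_biUnion hiN ⟨hc, ?_⟩
        have h1m : (1:ℝ) * ⟪b,c⟫ = |⟪b,c⟫| := by rw [abs_of_nonneg hu]; ring
        show (1:ℝ) * ⟪b,c⟫ ∈ Icc (m + i*ε) (m + (i+1)*ε)
        rw [h1m]; exact hmem
      · right
        refine Set.mem_biUnion hiN ⟨hc, ?_⟩
        have h1m : (-1:ℝ) * ⟪b,c⟫ = |⟪b,c⟫| := by rw [abs_of_neg hu]; ring
        show (-1:ℝ) * ⟪b,c⟫ ∈ Icc (m + i*ε) (m + (i+1)*ε)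
        rw [h1m]; exact hmem
    -- piece bound
    have hpiece : ∀ τ : ℝ, τ^2 = 1 → ∀ i : ℕ,
        μH[(2:ℝ)] (T τ i) ≤ ENNReal.ofReal (576 * ε^2) := by
      intro τ hτ i
      rcases Set.eq_empty_or_nonempty (T τ i) with he | ⟨c₀, hc₀⟩
      · rw [he]
        simp
      · have hc₀S : c₀ ∈ S := hc₀.1
        have hc₀1 : ‖c₀‖ = 1 := (hmemS c₀ hc₀S).1
        have hdiam : ∀ c ∈ T τ i, ‖c - c₀‖ ≤ 3*ε := by
          intro c hc
          have hcS : c ∈ S := hc.1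
          have h1 : ‖wb b c - wb b c₀‖ ≤ 2*ε := by
            have ha1' := (hmemS c hcS).2
            have ha2' := (hmemS c₀ hc₀S).2
            calc ‖wb b c - wb b c₀‖
                ≤ ‖wb b c - wb b a‖ + ‖wb b a - wb b c₀‖ := norm_sub_le_norm_sub_add_norm_sub _ _ _
              _ ≤ 2*ε := by rw [norm_sub_rev]; linarith
          have h2 : |⟪b,c⟫ - ⟪b,c₀⟫| ≤ ε := by
            obtain ⟨hI1, hI2⟩ := hc.2
            obtain ⟨hJ1, hJ2⟩ := hc₀.2
            have : |τ*⟪b,c⟫ - τ*⟪b,c₀⟫| ≤ ε := by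
              rw [abs_le]
              constructor <;> linarith
            have habs : |τ| = 1 := by
              rw [← Real.sqrt_sq_eq_abs, hτ, Real.sqrt_one]
            calc |⟪b,c⟫ - ⟪b,c₀⟫| = |τ| * |⟪b,c⟫ - ⟪b,c₀⟫| := by rw [habs, one_mul]
              _ = |τ*(⟪b,c⟫ - ⟪b,c₀⟫)| := (abs_mul _ _).symm
              _ = |τ*⟪b,c⟫ - τ*⟪b,c₀⟫| := by rw [mul_sub]
              _ ≤ ε := this
          have hpy := wb_pyth_sub b hb1 c c₀
          have hw2 : ‖wb b c - wb b c₀‖^2 ≤ (2*ε)^2 :=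
            pow_le_pow_left₀ (norm_nonneg _) h1 2
          have hu2' : (⟪b,c⟫ - ⟪b,c₀⟫)^2 ≤ ε^2 := by
            have := abs_le.1 h2
            nlinarith [this.1, this.2]
          have hsq : ‖c - c₀‖^2 ≤ (3*ε)^2 := by nlinarith [hpy, hw2, hu2', hε0.le]
          calc ‖c - c₀‖ = Real.sqrt (‖c - c₀‖^2) := (Real.sqrt_sq (norm_nonneg _)).symm
            _ ≤ Real.sqrt ((3*ε)^2) := Real.sqrt_le_sqrt hsq
            _ = 3*ε := Real.sqrt_sq (by positivity)
        have := cap_bound (T τ i) c₀ (3*ε) (by positivity) (by linarith) hc₀1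
          (fun c hc => (hmemS c hc.1).1) hdiam
        calc μH[(2:ℝ)] (T τ i) ≤ ENNReal.ofReal (64 * (3*ε)^2) := this
          _ = ENNReal.ofReal (576 * ε^2) := by congr 1; ring
    -- sum up
    have hsum : ∀ τ : ℝ, τ^2 = 1 →
        μH[(2:ℝ)] (⋃ i ∈ Finset.range (N+1), T τ i) ≤
          ENNReal.ofReal (((N:ℝ)+1) * (576 * ε^2)) := by
      intro τ hτ
      calc μH[(2:ℝ)] (⋃ i ∈ Finset.range (N+1), T τ i)
          ≤ ∑ i ∈ Finset.range (N+1), μH[(2:ℝ)] (T τ i) := measure_biUnion_finset_le _ _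
        _ ≤ ∑ _i ∈ Finset.range (N+1), ENNReal.ofReal (576 * ε^2) :=
            Finset.sum_le_sum (fun i _ => hpiece τ hτ i)
        _ = (N+1) • ENNReal.ofReal (576 * ε^2) := by
            rw [Finset.sum_const, Finset.card_range]
        _ = ENNReal.ofReal (((N:ℝ)+1) * (576 * ε^2)) := by
            rw [nsmul_eq_mul, ← ENNReal.ofReal_natCast, ← ENNReal.ofReal_mul (by positivity)]
            push_cast
            ring_nf
    have hNbound : ((N:ℝ)+1) ≤ 4/Real.sqrt ε := by
      have h1 : (N:ℝ) ≤ 2/Real.sqrt ε + 1 := (Nat.ceil_lt_add_one (by positivity)).le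
      have h2 : (2:ℝ) ≤ 2/Real.sqrt ε := by
        rw [le_div_iff₀ hsqpos]
        linarith
      have h3 : (4:ℝ)/Real.sqrt ε = 2/Real.sqrt ε + 2/Real.sqrt ε := by ring
      linarith
    calc μH[(2:ℝ)] S
        ≤ μH[(2:ℝ)] ((⋃ i ∈ Finset.range (N+1), T 1 i) ∪ (⋃ i ∈ Finset.range (N+1), T (-1) i)) :=
          measure_mono hcov
      _ ≤ μH[(2:ℝ)] (⋃ i ∈ Finset.range (N+1), T 1 i) +
            μH[(2:ℝ)] (⋃ i ∈ Finset.range (N+1), T (-1) i) := measure_union_le _ _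
      _ ≤ ENNReal.ofReal (((N:ℝ)+1) * (576 * ε^2)) + ENNReal.ofReal (((N:ℝ)+1) * (576 * ε^2)) :=
          add_le_add (hsum 1 (by norm_num)) (hsum (-1) (by norm_num))
      _ = ENNReal.ofReal (2 * (((N:ℝ)+1) * (576 * ε^2))) := by
          rw [← ENNReal.ofReal_add (by positivity) (by positivity)]
          congr 1
          ring
      _ ≤ ENNReal.ofReal ((4608 + 23 * A) * ε ^ ((3:ℝ)/2)) := by
          apply ENNReal.ofReal_le_ofReal
          rw [hε32]
          have hdiv : 4 / Real.sqrt ε * ε^2 = 4 * (ε * Real.sqrt ε) := by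
            rw [div_mul_eq_mul_div, eq_comm, eq_div_iff hsqpos.ne']
            linear_combination (4*ε) * hsqε
          have h4608 : 2 * (((N:ℝ)+1) * (576 * ε^2)) ≤ 4608 * (ε * Real.sqrt ε) := by
            calc 2 * (((N:ℝ)+1) * (576 * ε^2)) = 1152*ε^2*((N:ℝ)+1) := by ring
              _ ≤ 1152*ε^2*(4/Real.sqrt ε) := by
                  apply mul_le_mul_of_nonneg_left hNbound (by positivity)
              _ = 1152*(4/Real.sqrt ε * ε^2) := by ring
              _ = 1152*(4*(ε * Real.sqrt ε)) := by rw [hdiv]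
              _ = 4608 * (ε * Real.sqrt ε) := by ring
          have hfin : (4608:ℝ) * (ε * Real.sqrt ε) ≤ (4608 + 23*A) * (ε * Real.sqrt ε) := by
            apply mul_le_mul_of_nonneg_right (by linarith) (by positivity)
          linarith
  · -- LARGE case
    have hsub : S ⊆ Metric.sphere (0:E3) 1 := fun c hc => hc.1
    have hεsq : (1:ℝ)/23 ≤ ε * Real.sqrt ε := by
      have h1 : Real.sqrt (1/8) ≤ Real.sqrt ε := Real.sqrt_le_sqrt hlarge.le
      have h2 : (8:ℝ)/23 ≤ Real.sqrt (1/8) := by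
        rw [show (1:ℝ)/8 = ((8:ℝ)/23)^2 * (529/512) by norm_num]
        calc (8:ℝ)/23 = Real.sqrt (((8:ℝ)/23)^2) := (Real.sqrt_sq (by norm_num)).symm
          _ ≤ _ := Real.sqrt_le_sqrt (by nlinarith)
      nlinarith [hlarge, hsqpos]
    calc μH[(2:ℝ)] S ≤ μH[(2:ℝ)] (Metric.sphere (0:E3) 1) := measure_mono hsub
      _ ≤ ENNReal.ofReal A := hA
      _ ≤ ENNReal.ofReal ((4608 + 23 * A) * ε ^ ((3:ℝ)/2)) := by
          apply ENNReal.ofReal_le_ofReal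
          rw [hε32]
          nlinarith [hεsq, hA0, hε0, hsqpos]
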